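/- Let f : ℝⁿ → ℝⁿ be continuous and let [a, b] ⊆ ℝⁿ be a compact interval. Suppose there exist an index i and a point x' ∈ [a, b] with x'_i = a_i and f_i(x') < 0 (or x'_i = b_i and f_i(x') > 0). Then [a, b] is not forward invariant for ẋ = f(x): there exist a C¹ curve x : [0,T] → ℝⁿ with x'(t) = f(x(t)), x(0) = x' ∈ [a, b], and a time t ∈ (0, T] with x(t) ∉ [a, b]. -/

import Mathlib

open Set Metric MeasureTheory Filter intervalIntegral BoundedContinuousFunction
open scoped Convolution Topology NNReal

set_option maxHeartbeats 1000000
set_option synthInstance.maxHeartbeats 400000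

theorem approx_contDiff {n : ℕ} (f : (Fin n → ℝ) → (Fin n → ℝ)) (hf : Continuous f)
    (K : Set (Fin n → ℝ)) (hK : IsCompact K) {ε : ℝ} (hε : 0 < ε) :
    ∃ g : (Fin n → ℝ) → (Fin n → ℝ), ContDiff ℝ 1 g ∧ ∀ x ∈ K, dist (g x) (f x) ≤ ε := by
  have hK1 : IsCompact (cthickening 1 K) := hK.cthickening
  have hucont : UniformContinuousOn f (cthickening 1 K) :=
    hK1.uniformContinuousOn_of_continuous hf.continuousOn
  rw [Metric.uniformContinuousOn_iff] at hucont
  obtain ⟨δ, hδ, hδf⟩ := hucont ε hε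
  set r : ℝ := min δ 1 with hr
  have hr0 : 0 < r := lt_min hδ one_pos
  set φ : ContDiffBump (0 : Fin n → ℝ) := ⟨r / 2, r, by positivity, by linarith⟩ with hφ
  refine ⟨φ.normed volume ⋆[ContinuousLinearMap.lsmul ℝ ℝ, volume] f, ?_, ?_⟩
  · exact (φ.hasCompactSupport_normed).contDiff_convolution_left _
      φ.contDiff_normed hf.locallyIntegrable
  · intro x hx
    refine ContDiffBump.dist_normed_convolution_le hf.aestronglyMeasurable ?_
    intro y hy
    have hxK : x ∈ cthickening 1 K := self_subset_cthickening K hx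
    have hyK : y ∈ cthickening 1 K := by
      have : dist y x < 1 := lt_of_lt_of_le (mem_ball.1 hy) (min_le_right _ _)
      exact (mem_cthickening_of_dist_le y x 1 K hx this.le)
    exact (hδf y hyK x hxK (lt_of_lt_of_le (mem_ball.1 hy) (min_le_left _ _))).le

theorem lipschitzOnWith_of_contDiff {n : ℕ} (g : (Fin n → ℝ) → (Fin n → ℝ))
    (hg : ContDiff ℝ 1 g) (c : Fin n → ℝ) (R : ℝ) :
    ∃ L : ℝ≥0, LipschitzOnWith L g (closedBall c R) := by
  obtain ⟨C, hC⟩ := (isCompact_closedBall c R).exists_bound_of_continuousOn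
    ((hg.continuous_fderiv one_ne_zero).continuousOn)
  refine ⟨⟨max C 0, le_max_right _ _⟩,
    (convex_closedBall c R).lipschitzOnWith_of_nnnorm_hasFDerivWithin_le
      (fun x _ => ((hg.differentiable one_ne_zero) x).hasFDerivAt.hasFDerivWithinAt) ?_⟩
  intro x hx
  change ‖fderiv ℝ g x‖ ≤ max C 0
  exact (hC x hx).trans (le_max_left _ _)

theorem equicontinuous_of_lipschitzWith {ι α β : Type*} [PseudoMetricSpace α]
    [PseudoMetricSpace β] (F : ι → α → β) (K : ℝ≥0) (h : ∀ i, LipschitzWith K (F i)) :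
    Equicontinuous F := by
  intro x₀
  rw [Metric.equicontinuousAt_iff]
  intro ε hε
  refine ⟨ε / (K + 1), by positivity, fun x hx i => ?_⟩
  rw [dist_comm]
  calc dist (F i x) (F i x₀) ≤ K * dist x x₀ := (h i).dist_le_mul _ _
    _ ≤ K * (ε / (K + 1)) := by
        gcongr
    _ < (K + 1) * (ε / (K + 1)) := by
        have : (0:ℝ) < ε / (K + 1) := by positivity
        have hK : (K:ℝ) < K + 1 := by linarith
        exact mul_lt_mul_of_pos_right hK this
    _ = ε := by field_simp

/-- **Local Peano existence theorem.** -/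
theorem peano {n : ℕ} (f : (Fin n → ℝ) → (Fin n → ℝ)) (hf : Continuous f)
    (x' : Fin n → ℝ) {R : ℝ} (hR : 0 < R) :
    ∃ T : ℝ, 0 < T ∧ ∃ X : ℝ → (Fin n → ℝ), X 0 = x' ∧
      (∀ t ∈ Icc (0:ℝ) T, X t ∈ closedBall x' R) ∧
      (∀ t ∈ Icc (0:ℝ) T, HasDerivAt X (f (X t)) t) := by
  -- bound for f on the ball
  obtain ⟨C₀, hC₀⟩ := (isCompact_closedBall x' R).exists_bound_of_continuousOn
    hf.continuousOn
  set Cr : ℝ := max C₀ 0 + 1 with hCr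
  have hCr0 : 0 < Cr := by positivity
  set C : ℝ≥0 := ⟨Cr, hCr0.le⟩ with hC
  set T : ℝ := R / Cr with hT
  have hT0 : 0 < T := by positivity
  have h0T : (0:ℝ) ∈ Icc (0:ℝ) T := ⟨le_rfl, hT0.le⟩
  -- approximating fields
  have happrox : ∀ k : ℕ, ∃ g : (Fin n → ℝ) → (Fin n → ℝ), ContDiff ℝ 1 g ∧
      ∀ x ∈ closedBall x' R, dist (g x) (f x) ≤ 1 / (k + 1) := fun k =>
    approx_contDiff f hf _ (isCompact_closedBall x' R) (by positivity)
  choose g hg hgf using happrox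
  have hgbound : ∀ k, ∀ x ∈ closedBall x' R, ‖g k x‖ ≤ Cr := by
    intro k x hx
    have h1 : ‖g k x‖ ≤ ‖f x‖ + dist (g k x) (f x) := by
      rw [dist_eq_norm]
      have := norm_add_le (g k x - f x) (f x)
      simpa [sub_add_cancel] using this.trans_eq (by ring)
    have h2 : dist (g k x) (f x) ≤ 1 := (hgf k x hx).trans (by
      rw [div_le_one (by positivity)]; linarith [Nat.cast_nonneg (α := ℝ) k])
    have h3 : ‖f x‖ ≤ max C₀ 0 := (hC₀ x hx).trans (le_max_left _ _)
    linarith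
  choose L hL using fun k => lipschitzOnWith_of_contDiff (g k) (hg k) x' R
  -- Picard-Lindelöf solutions
  have hpl : ∀ k : ℕ, IsPicardLindelof (fun _ : ℝ => g k) (tmin := 0) (tmax := T) ⟨0, h0T⟩ x'
      ⟨R, hR.le⟩ 0 C (L k) := fun k =>
    IsPicardLindelof.of_time_independent (fun x hx => hgbound k x hx) (hL k) (by
        have h1 : Cr * T = R := by rw [hT]; field_simp
        change Cr * max (T - 0) (0 - 0) ≤ R - 0
        rw [sub_zero, sub_zero, max_eq_left hT0.le, h1]; linarith)
  have hfix : ∀ k, ∃ α : ODE.FunSpace (⟨0, h0T⟩ : Icc (0:ℝ) T) x' 0 C,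
      Function.IsFixedPt (ODE.FunSpace.next (hpl k) (mem_closedBall_self le_rfl)) α := fun k =>
    ODE.FunSpace.exists_isFixedPt_next (hpl k) _
  choose Fk hFk using hfix
  set X : ℕ → ℝ → (Fin n → ℝ) := fun k t => (Fk k).compProj t with hX
  have hX0 : ∀ k, X k 0 = x' := by
    intro k
    simp only [hX]
    rw [ODE.FunSpace.compProj_of_mem h0T]
    exact (Fk k).apply_of_zero
  have hXmem : ∀ k, ∀ t : ℝ, X k t ∈ closedBall x' R := fun k t =>
    (Fk k).compProj_mem_closedBall (hpl k).mul_max_le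
  have hXderiv : ∀ k, ∀ t ∈ Icc (0:ℝ) T, HasDerivWithinAt (X k) (g k (X k t)) (Icc 0 T) t := by
    intro k t ht
    have h1 := ODE.hasDerivWithinAt_picard_Icc (f := fun _ : ℝ => g k) (u := univ) h0T
      ((hg k).continuous.comp continuous_snd).continuousOn
      (Fk k).continuous_compProj.continuousOn (fun _ _ => mem_univ _) x' ht
    refine h1.congr_of_mem (fun s hs => ?_) ht
    simp only [hX]
    rw [ODE.FunSpace.compProj_of_mem hs]
    exact (ODE.FunSpace.isFixedPt_next_iff (hpl k) _).1 (hFk k) ⟨s, hs⟩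
  have hXlip : ∀ k, LipschitzWith C (X k) := by
    intro k
    have h1 : LipschitzWith C (Fk k) := (Fk k).lipschitzWith
    have h2 : LipschitzWith 1 (projIcc (0:ℝ) T hT0.le) := LipschitzWith.projIcc _
    have := h1.comp h2
    rw [mul_one] at this
    exact this
  -- Arzelà–Ascoli
  haveI : CompactSpace (Icc (0:ℝ) T) := by infer_instance
  set F : ℕ → (Icc (0:ℝ) T →ᵇ (Fin n → ℝ)) := fun k =>
    BoundedContinuousFunction.mkOfCompact
      ⟨fun t => X k t, ((hXlip k).continuous).comp continuous_subtype_val⟩ with hF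
  have hFcoe : ∀ k (t : Icc (0:ℝ) T), F k t = X k t := fun k t => rfl
  have hin_s : ∀ (u : Icc (0:ℝ) T →ᵇ (Fin n → ℝ)) (t : Icc (0:ℝ) T),
      u ∈ range F → u t ∈ closedBall x' R := by
    rintro u t ⟨k, rfl⟩
    exact hXmem k t
  have hequi : Equicontinuous ((↑) : range F → Icc (0:ℝ) T → (Fin n → ℝ)) := by
    have := equicontinuous_of_lipschitzWith (fun u : range F => (u : Icc (0:ℝ) T → Fin n → ℝ)) C ?_
    · exact this
    · rintro ⟨u, k, rfl⟩
      exact (hXlip k).comp (LipschitzWith.subtype_val _) |>.weaken (by simp)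
  have hcompact : IsCompact (closure (range F)) :=
    BoundedContinuousFunction.arzela_ascoli (closedBall x' R) (isCompact_closedBall x' R)
      (range F) hin_s hequi
  obtain ⟨G, hG, φ, hφmono, hφtend⟩ := hcompact.tendsto_subseq
    (fun k => subset_closure (mem_range_self (f := F) k))
  -- pointwise convergence
  have hdistG : Tendsto (fun k => dist (F (φ k)) G) atTop (𝓝 0) :=
    tendsto_iff_dist_tendsto_zero.mp hφtend
  have hpt : ∀ t : Icc (0:ℝ) T, Tendsto (fun k => X (φ k) (t : ℝ)) atTop (𝓝 (G t)) := by
    intro t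
    rw [tendsto_iff_dist_tendsto_zero]
    exact squeeze_zero (fun k => dist_nonneg)
      (fun k => BoundedContinuousFunction.dist_coe_le_dist (f := F (φ k)) (g := G) t) hdistG
  -- integral equation for the approximate solutions
  have hXint : ∀ k, ∀ t ∈ Icc (0:ℝ) T, X k t = x' + ∫ s in (0:ℝ)..t, g k (X k s) := by
    intro k t ht
    have hcont : ContinuousOn (X k) (Icc 0 t) := ((hXlip k).continuous).continuousOn
    have hderiv : ∀ s ∈ Ioo (0:ℝ) t, HasDerivWithinAt (X k) (g k (X k s)) (Ioi s) s := by
      intro s hs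
      have hsT : s ∈ Icc (0:ℝ) T := ⟨hs.1.le, (hs.2.trans_le ht.2).le⟩
      exact ((hXderiv k s hsT).hasDerivAt
        (Icc_mem_nhds hs.1 (lt_of_lt_of_le hs.2 ht.2))).hasDerivWithinAt
    have hint : IntervalIntegrable (fun s => g k (X k s)) volume 0 t :=
      ((hg k).continuous.comp (hXlip k).continuous).intervalIntegrable 0 t
    have heq := intervalIntegral.integral_eq_sub_of_hasDeriv_right_of_le ht.1 hcont hderiv hint
    rw [heq, hX0 k]
    abel
  -- the limit function
  set y : ℝ → (Fin n → ℝ) := fun s => G (projIcc 0 T hT0.le s) with hy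
  have hycont : Continuous y := G.continuous.comp continuous_projIcc
  have hyeq : ∀ t, ∀ ht : t ∈ Icc (0:ℝ) T, y t = G ⟨t, ht⟩ := by
    intro t ht
    exact congrArg G (projIcc_of_mem hT0.le ht)
  have hymem : ∀ s : ℝ, y s ∈ closedBall x' R := fun s =>
    Metric.isClosed_closedBall.mem_of_tendsto (hpt (projIcc 0 T hT0.le s))
      (Eventually.of_forall fun k => hXmem _ _)
  have hεlim : Tendsto (fun k => 1 / ((φ k : ℝ) + 1)) atTop (𝓝 0) :=
    tendsto_one_div_add_atTop_nhds_zero_nat.comp hφmono.tendsto_atTop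
  -- limit integral equation
  have hlim : ∀ t ∈ Icc (0:ℝ) T, y t = x' + ∫ s in (0:ℝ)..t, f (y s) := by
    intro t ht
    have h1 : Tendsto (fun k => X (φ k) t) atTop (𝓝 (y t)) := by
      rw [hyeq t ht]; exact hpt ⟨t, ht⟩
    have h2 : Tendsto (fun k => x' + ∫ s in (0:ℝ)..t, g (φ k) (X (φ k) s)) atTop
        (𝓝 (x' + ∫ s in (0:ℝ)..t, f (y s))) := by
      refine Tendsto.const_add _ ?_
      apply intervalIntegral.tendsto_integral_filter_of_dominated_convergence (fun _ => Cr)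
      · exact Eventually.of_forall fun k =>
          (((hg (φ k)).continuous.comp (hXlip (φ k)).continuous).aestronglyMeasurable).restrict
      · exact Eventually.of_forall fun k => ae_of_all _ fun s _ => hgbound (φ k) _ (hXmem _ _)
      · exact intervalIntegrable_const
      · refine ae_of_all _ fun s hs => ?_
        have hsT : s ∈ Icc (0:ℝ) T := by
          rw [uIoc_of_le ht.1] at hs
          exact ⟨hs.1.le, hs.2.trans ht.2⟩
        have hXs : Tendsto (fun k => X (φ k) s) atTop (𝓝 (y s)) := by
          rw [hyeq s hsT]; exact hpt ⟨s, hsT⟩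
        have hfs : Tendsto (fun k => f (X (φ k) s)) atTop (𝓝 (f (y s))) :=
          (hf.tendsto _).comp hXs
        rw [tendsto_iff_dist_tendsto_zero]
        have e1 : Tendsto (fun k => dist (g (φ k) (X (φ k) s)) (f (X (φ k) s))) atTop (𝓝 0) :=
          squeeze_zero (fun _ => dist_nonneg) (fun k => hgf (φ k) _ (hXmem _ _)) hεlim
        have e2 : Tendsto (fun k => dist (f (X (φ k) s)) (f (y s))) atTop (𝓝 0) :=
          tendsto_iff_dist_tendsto_zero.mp hfs
        refine squeeze_zero (g := fun k => dist (g (φ k) (X (φ k) s)) (f (X (φ k) s)) +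
            dist (f (X (φ k) s)) (f (y s))) (fun k => dist_nonneg)
          (fun k => dist_triangle _ _ _) ?_
        simpa using e1.add e2
    have h2' : Tendsto (fun k => X (φ k) t) atTop (𝓝 (x' + ∫ s in (0:ℝ)..t, f (y s))) :=
      h2.congr fun k => (hXint (φ k) t ht).symm
    exact tendsto_nhds_unique h1 h2'
  -- the solution
  have hfycont : Continuous fun s => f (y s) := hf.comp hycont
  refine ⟨T, hT0, fun t => x' + ∫ s in (0:ℝ)..t, f (y s), by simp, ?_, ?_⟩
  · intro t ht
    show x' + (∫ s in (0:ℝ)..t, f (y s)) ∈ closedBall x' R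
    rw [← hlim t ht]
    exact hymem t
  · intro t ht
    have hd : HasDerivAt (fun u => x' + ∫ s in (0:ℝ)..u, f (y s)) (f (y t)) t := by
      refine HasDerivAt.const_add _ ?_
      exact intervalIntegral.integral_hasDerivAt_right
        (hfycont.intervalIntegrable _ _)
        (hfycont.stronglyMeasurableAtFilter _ _)
        hfycont.continuousAt
    have : f (y t) = f (x' + ∫ s in (0:ℝ)..t, f (y s)) := by rw [← hlim t ht]
    rwa [this] at hd

/-- If a continuous vector field points strictly out of the box `[a, b]` at a
boundary point `x'`, then `[a, b]` is not forward invariant: some C¹ solution starting at `x'`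
leaves the box. -/
theorem box_not_forward_invariant_of_outward_field {n : ℕ}
    (f : (Fin n → ℝ) → (Fin n → ℝ))
    (hf_cont : Continuous f)
    (a b : Fin n → ℝ) (hab : a ≤ b)
    (i : Fin n) (x' : Fin n → ℝ) (hx' : x' ∈ Icc a b)
    (hviol : (x' i = a i ∧ f x' i < 0) ∨ (x' i = b i ∧ 0 < f x' i)) :
    ∃ (T : ℝ) (x : ℝ → Fin n → ℝ), 0 < T ∧
      (∀ t ∈ Icc (0:ℝ) T, HasDerivAt x (f (x t)) t) ∧
      x 0 = x' ∧ ∃ t ∈ Ioc (0:ℝ) T, x t ∉ Icc a b := by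
  have he : 0 < |f x' i| := by
    rcases hviol with ⟨_, h⟩ | ⟨_, h⟩
    · exact abs_pos.2 (ne_of_lt h)
    · exact abs_pos.2 (ne_of_gt h)
  obtain ⟨δ, hδ0, hδ⟩ := Metric.continuousAt_iff.1 (hf_cont.continuousAt (x := x'))
    (|f x' i| / 2) (by positivity)
  obtain ⟨T, hT0, X, hX0, hXmem, hXd⟩ := peano f hf_cont x' (half_pos hδ0)
  have hclose : ∀ t ∈ Icc (0:ℝ) T, |f (X t) i - f x' i| < |f x' i| / 2 := by
    intro t ht
    have h1 : dist (X t) x' < δ :=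
      lt_of_le_of_lt (mem_closedBall.1 (hXmem t ht)) (half_lt_self hδ0)
    have h2 : dist (f (X t)) (f x') < |f x' i| / 2 := hδ h1
    have h3 : |f (X t) i - f x' i| ≤ ‖f (X t) - f x'‖ := by
      have := norm_le_pi_norm (f (X t) - f x') i
      simpa [Real.norm_eq_abs] using this
    calc |f (X t) i - f x' i| ≤ ‖f (X t) - f x'‖ := h3
      _ = dist (f (X t)) (f x') := (dist_eq_norm _ _).symm
      _ < |f x' i| / 2 := h2
  have hXi : ∀ t ∈ Icc (0:ℝ) T, HasDerivAt (fun u => X u i) (f (X t) i) t :=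
    fun t ht => (hasDerivAt_pi.1 (hXd t ht)) i
  have hXicont : ContinuousOn (fun u => X u i) (Icc (0:ℝ) T) :=
    fun t ht => ((hXi t ht).continuousAt.continuousWithinAt)
  refine ⟨T, X, hT0, hXd, hX0, T, ⟨hT0, le_rfl⟩, ?_⟩
  rcases hviol with ⟨ha, h⟩ | ⟨hb, h⟩
  · -- exits through the lower face
    have habs : |f x' i| = -(f x' i) := abs_of_neg h
    have hneg : ∀ t ∈ Icc (0:ℝ) T, f (X t) i < 0 := by
      intro t ht
      have := hclose t ht
      rw [habs] at this
      have := (abs_lt.1 this).2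
      linarith
    have hanti : StrictAntiOn (fun u => X u i) (Icc (0:ℝ) T) := by
      refine strictAntiOn_of_deriv_neg (convex_Icc 0 T) hXicont ?_
      intro t ht
      rw [interior_Icc] at ht
      rw [(hXi t (Ioo_subset_Icc_self ht)).deriv]
      exact hneg t (Ioo_subset_Icc_self ht)
    have hlt : X T i < X 0 i := hanti ⟨le_rfl, hT0.le⟩ ⟨hT0.le, le_rfl⟩ hT0
    rw [hX0] at hlt
    intro hmem
    have := hmem.1 i
    rw [← ha] at this
    linarith
  · -- exits through the upper face
    have habs : |f x' i| = f x' i := abs_of_pos h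
    have hpos : ∀ t ∈ Icc (0:ℝ) T, 0 < f (X t) i := by
      intro t ht
      have := hclose t ht
      rw [habs] at this
      have := (abs_lt.1 this).1
      linarith
    have hmono : StrictMonoOn (fun u => X u i) (Icc (0:ℝ) T) := by
      refine strictMonoOn_of_deriv_pos (convex_Icc 0 T) hXicont ?_
      intro t ht
      rw [interior_Icc] at ht
      rw [(hXi t (Ioo_subset_Icc_self ht)).deriv]
      exact hpos t (Ioo_subset_Icc_self ht)
    have hlt : X 0 i < X T i := hmono ⟨le_rfl, hT0.le⟩ ⟨hT0.le, le_rfl⟩ hT0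
    rw [hX0] at hlt
    intro hmem
    have := hmem.2 i
    rw [← hb] at this
    linarith
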